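/- arXiv:1701.01420 — 3 statements merged into one kernel-verified Lean document; each statement's English description precedes it below -/
import Mathlib

section
/- Let γ be a graph with half-edges, let 𝒱 ⊆ Ver be a subset of its vertices, and let C ∈ π₀(γ,𝒱) be a connected component of the induced subgraph γ_𝒱. If f is a flag with ε(f) ∉ 𝒱 and ε(ϑ(f)) ∈ C that disconnects C from the rest of γ, then the edge {f, ϑ(f)} is the unique crossing edge of C in γ. Consequently, the map assigning to each flag f ∈ F°_γ(𝒱) the connected component of γ_𝒱 containing ε(ϑ(f)) is injective. -/
/-- The set of edges of a graph with half-edges: unordered pairs `{f, ϑ f}`. -/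
def edgeSet {F : Type*} (ϑ : F → F) : Set (Set F) :=
  {e | ∃ f, e = {f, ϑ f}}

/-- The edges both of whose flags have ε-image in `S`. -/
def edgesIn {V F : Type*} (ε : F → V) (ϑ : F → F) (S : Set V) : Set (Set F) :=
  {e | ∃ f, e = {f, ϑ f} ∧ ε f ∈ S ∧ ε (ϑ f) ∈ S}

/-- One-step adjacency in the graph: `v` and `v'` are the two endpoints of an edge. -/
def Step {V F : Type*} (ε : F → V) (ϑ : F → F) (v v' : V) : Prop :=
  ∃ f, ε f = v ∧ ε (ϑ f) = v'

/-- The graph is connected: any two distinct vertices are joined by a chain of edges. -/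
def IsConnectedGraph {V F : Type*} (ε : F → V) (ϑ : F → F) : Prop :=
  ∀ v v' : V, v ≠ v' → Relation.ReflTransGen (Step ε ϑ) v v'

/-- One-step adjacency within the induced subgraph on the vertex subset `S`. -/
def StepIn {V F : Type*} (ε : F → V) (ϑ : F → F) (S : Set V) (v v' : V) : Prop :=
  v ∈ S ∧ v' ∈ S ∧ ∃ f, ε f = v ∧ ε (ϑ f) = v'

/-- The connected component of `v` in the induced subgraph on `S`. -/
def component {V F : Type*} (ε : F → V) (ϑ : F → F) (S : Set V) (v : V) : Set V :=
  {w | Relation.ReflTransGen (StepIn ε ϑ S) v w}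

/-- `π₀(γ,S)`: the set of connected components of the induced subgraph on `S`. -/
def pi0 {V F : Type*} (ε : F → V) (ϑ : F → F) (S : Set V) : Set (Set V) :=
  {C | ∃ v ∈ S, C = component ε ϑ S v}

/-- The crossing edges of a subset `C` of vertices: edges with exactly one flag
having ε-image in `C`. -/
def crossingEdges {V F : Type*} (ε : F → V) (ϑ : F → F) (C : Set V) : Set (Set F) :=
  {e | ∃ f, e = {f, ϑ f} ∧ ε f ∉ C ∧ ε (ϑ f) ∈ C}

/-- One-step adjacency in the graph obtained by deleting the two flags `f₀`, `ϑ f₀`. -/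
def StepAvoid {V F : Type*} (ε : F → V) (ϑ : F → F) (f₀ : F) (v v' : V) : Prop :=
  ∃ g, g ≠ f₀ ∧ g ≠ ϑ f₀ ∧ ε g = v ∧ ε (ϑ g) = v'

/-- The flag `f₀` disconnects `C` from the rest of the graph: after deleting the flags
`f₀` and `ϑ f₀`, there is no chain of edges from a vertex of `C` to a vertex outside `C`. -/
def Disconnects {V F : Type*} (ε : F → V) (ϑ : F → F) (C : Set V) (f₀ : F) : Prop :=
  ∀ v ∈ C, ∀ v' ∉ C, ¬ Relation.ReflTransGen (StepAvoid ε ϑ f₀) v v'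

/-- `F°_γ(S)`: the flags `f` with `ε f ∉ S` that disconnect from the rest of the graph
the connected component of the induced subgraph on `S` containing `ε (ϑ f)`. -/
def Fcirc {V F : Type*} (ε : F → V) (ϑ : F → F) (S : Set V) : Set F :=
  {f | ε f ∉ S ∧ ε (ϑ f) ∈ S ∧ Disconnects ε ϑ (component ε ϑ S (ε (ϑ f))) f}

/-- `F†_γ(S)`: the flags of `F°_γ(S)` whose associated component carries no marked label. -/
def Fdagger {V F L : Type*} (ε : F → V) (ϑ : F → F) (εS : L → V) (S : Set V) : Set F :=
  {f | f ∈ Fcirc ε ϑ S ∧ ∀ s : L, εS s ∉ component ε ϑ S (ε (ϑ f))}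

lemma component_subset {V F : Type*} (ε : F → V) (ϑ : F → F) (S : Set V) (v : V)
    (hv : v ∈ S) : component ε ϑ S v ⊆ S := by
  intro w hw
  induction hw with
  | refl => exact hv
  | tail _ h _ => exact h.2.1

lemma crossing_unique {V F : Type*} (ε : F → V) (ϑ : F → F)
    (hinv : Function.Involutive ϑ)
    (𝒱 : Set V) (C : Set V) (hC : C ∈ pi0 ε ϑ 𝒱)
    (f : F) (hf1 : ε f ∉ 𝒱) (hf2 : ε (ϑ f) ∈ C)
    (hdis : Disconnects ε ϑ C f) :
    (({f, ϑ f} : Set F) ∈ crossingEdges ε ϑ C ∧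
      ∀ e ∈ crossingEdges ε ϑ C, e = ({f, ϑ f} : Set F)) := by
  obtain ⟨v, hv, rfl⟩ := hC
  have hsub := component_subset ε ϑ 𝒱 v hv
  have hfC : ε f ∉ component ε ϑ 𝒱 v := fun h => hf1 (hsub h)
  refine ⟨⟨f, rfl, hfC, hf2⟩, ?_⟩
  rintro e ⟨g, rfl, hg1, hg2⟩
  by_cases h1 : g = f
  · subst h1; rfl
  by_cases h2 : g = ϑ f
  · subst h2; rw [hinv f]; exact Set.pair_comm _ _
  exfalso
  refine hdis (ε (ϑ g)) hg2 (ε g) hg1 ?_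
  refine Relation.ReflTransGen.single ⟨ϑ g, ?_, ?_, rfl, by rw [hinv g]⟩
  · intro h; exact h2 (by rw [← h, hinv])
  · intro h; exact h1 (hinv.injective h)

/-- If `f` is a flag with `ε f ∉ 𝒱` and `ε (ϑ f) ∈ C` for a connected
component `C` of the induced subgraph on `𝒱` which `f` disconnects from the rest of the
graph, then the edge `{f, ϑ f}` is the unique crossing edge of `C`; consequently, the map
assigning to each flag of `F°_γ(𝒱)` the component of `ε (ϑ f)` is injective. -/
theorem stmt0 {V F : Type*} [Fintype V] [Fintype F]
    (ε : F → V) (ϑ : F → F) (hinv : Function.Involutive ϑ) (hfpf : ∀ f, ϑ f ≠ f)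
    (𝒱 : Set V) (C : Set V) (hC : C ∈ pi0 ε ϑ 𝒱)
    (f : F) (hf1 : ε f ∉ 𝒱) (hf2 : ε (ϑ f) ∈ C)
    (hdis : Disconnects ε ϑ C f) :
    (({f, ϑ f} : Set F) ∈ crossingEdges ε ϑ C ∧
      ∀ e ∈ crossingEdges ε ϑ C, e = ({f, ϑ f} : Set F)) ∧
    (∀ f₁ ∈ Fcirc ε ϑ 𝒱, ∀ f₂ ∈ Fcirc ε ϑ 𝒱,
      component ε ϑ 𝒱 (ε (ϑ f₁)) = component ε ϑ 𝒱 (ε (ϑ f₂)) → f₁ = f₂) := by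
  constructor
  · exact crossing_unique ε ϑ hinv 𝒱 C hC f hf1 hf2 hdis
  · rintro f₁ ⟨h11, h12, h13⟩ f₂ ⟨h21, h22, h23⟩ hcomp
    have hC' : component ε ϑ 𝒱 (ε (ϑ f₁)) ∈ pi0 ε ϑ 𝒱 := ⟨_, h12, rfl⟩
    have hmem1 : ε (ϑ f₁) ∈ component ε ϑ 𝒱 (ε (ϑ f₁)) := Relation.ReflTransGen.refl
    have hmem2 : ε (ϑ f₂) ∈ component ε ϑ 𝒱 (ε (ϑ f₁)) := by
      rw [hcomp]; exact Relation.ReflTransGen.refl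
    obtain ⟨_, huniq⟩ := crossing_unique ε ϑ hinv 𝒱 _ hC' f₁ h11 hmem1 h13
    have hsub := component_subset ε ϑ 𝒱 (ε (ϑ f₁)) h12
    have hcross : ({f₂, ϑ f₂} : Set F) ∈ crossingEdges ε ϑ (component ε ϑ 𝒱 (ε (ϑ f₁))) :=
      ⟨f₂, rfl, fun h => h21 (hsub h), hmem2⟩
    have heq := huniq _ hcross
    have : f₂ ∈ ({f₁, ϑ f₁} : Set F) := by rw [← heq]; exact Set.mem_insert _ _
    rcases this with h | h
    · exact h.symm
    · exact absurd (h ▸ h12 : ε f₂ ∈ 𝒱) h21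
end

section
/- Let γ be a marked graph with half-edges and 𝒱 ⊆ Ver. Then |F°_γ(𝒱)| ≤ |F†_γ(𝒱)| + |S ∩ ε⁻¹(𝒱)|; equivalently, the number of flags in F°_γ(𝒱) ∖ F†_γ(𝒱) is at most the number of marked labels carried by the vertices of 𝒱. -/
lemma stepIn_symm {V F : Type*} (ε : F → V) (ϑ : F → F) (S : Set V)
    (hinv : Function.Involutive ϑ) : Symmetric (StepIn ε ϑ S) := by
  rintro v v' ⟨hv, hv', f, hf, hf'⟩
  exact ⟨hv', hv, ϑ f, hf', by rw [hinv f]; exact hf⟩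

lemma component_eq_of_mem {V F : Type*} (ε : F → V) (ϑ : F → F) (S : Set V)
    (hinv : Function.Involutive ϑ) {v v' x : V}
    (hx : x ∈ component ε ϑ S v) (hx' : x ∈ component ε ϑ S v') :
    component ε ϑ S v = component ε ϑ S v' := by
  have hsymm : Symmetric (Relation.ReflTransGen (StepIn ε ϑ S)) := fun a b h =>
    (@Relation.ReflTransGen.stdSymm _ _ ⟨stepIn_symm ε ϑ S hinv⟩).symm a b h
  ext w
  constructor
  · intro hw
    exact Relation.ReflTransGen.trans hx' (Relation.ReflTransGen.trans (hsymm hx) hw)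
  · intro hw
    exact Relation.ReflTransGen.trans hx (Relation.ReflTransGen.trans (hsymm hx') hw)

lemma fcirc_component_inj {V F : Type*} (ε : F → V) (ϑ : F → F) (S : Set V)
    (hinv : Function.Involutive ϑ) {f f' : F}
    (hf : f ∈ Fcirc ε ϑ S) (hf' : f' ∈ Fcirc ε ϑ S)
    (hc : component ε ϑ S (ε (ϑ f)) = component ε ϑ S (ε (ϑ f'))) : f = f' := by
  by_contra hne
  obtain ⟨h1, h2, h3⟩ := hf
  obtain ⟨h1', h2', h3'⟩ := hf'
  have hmem : ε (ϑ f') ∈ component ε ϑ S (ε (ϑ f)) := by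
    rw [hc]; exact Relation.ReflTransGen.refl
  have hout : ε f' ∉ component ε ϑ S (ε (ϑ f)) := fun h =>
    h1' (component_subset ε ϑ S (ε (ϑ f)) h2 h)
  refine h3 _ hmem _ hout (Relation.ReflTransGen.single ?_)
  refine ⟨ϑ f', fun h => h1 (h ▸ h2'), fun h => hne (hinv.injective h).symm, rfl, ?_⟩
  rw [hinv f']

/-- For a marked graph with half-edges and a vertex subset `𝒱`,
`|F°_γ(𝒱)| ≤ |F†_γ(𝒱)| + |S ∩ ε⁻¹(𝒱)|`. -/
theorem stmt4 {V F L : Type*} [Fintype V] [Fintype F] [Fintype L]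
    (ε : F → V) (ϑ : F → F) (εS : L → V)
    (hinv : Function.Involutive ϑ) (hfpf : ∀ f, ϑ f ≠ f)
    (𝒱 : Set V) :
    (Fcirc ε ϑ 𝒱).ncard ≤ (Fdagger ε ϑ εS 𝒱).ncard + {s : L | εS s ∈ 𝒱}.ncard := by
  classical
  have hfin : (Fcirc ε ϑ 𝒱).Finite := Set.toFinite _
  have hsub : Fdagger ε ϑ εS 𝒱 ⊆ Fcirc ε ϑ 𝒱 := fun f hf => hf.1
  have hkey : (Fcirc ε ϑ 𝒱 \ Fdagger ε ϑ εS 𝒱).ncard ≤ {s : L | εS s ∈ 𝒱}.ncard := by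
    have hex : ∀ f ∈ Fcirc ε ϑ 𝒱 \ Fdagger ε ϑ εS 𝒱,
        ∃ s : L, εS s ∈ component ε ϑ 𝒱 (ε (ϑ f)) := by
      intro f hf
      by_contra h
      push_neg at h
      exact hf.2 ⟨hf.1, h⟩
    rcases Set.eq_empty_or_nonempty (Fcirc ε ϑ 𝒱 \ Fdagger ε ϑ εS 𝒱) with he | ⟨f₀, hf₀⟩
    · simp [he]
    have : Nonempty L := ⟨(hex f₀ hf₀).choose⟩
    choose! lab hlab using hex
    refine Set.ncard_le_ncard_of_injOn lab ?_ ?_ (Set.toFinite _)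
    · intro f hf
      exact component_subset ε ϑ 𝒱 (ε (ϑ f)) hf.1.2.1 (hlab f hf)
    · intro f hf f' hf' heq
      refine fcirc_component_inj ε ϑ 𝒱 hinv hf.1 hf'.1 ?_
      exact component_eq_of_mem ε ϑ 𝒱 hinv (hlab f hf) (heq ▸ hlab f' hf')
  calc (Fcirc ε ϑ 𝒱).ncard
      = (Fdagger ε ϑ εS 𝒱).ncard + (Fcirc ε ϑ 𝒱 \ Fdagger ε ϑ εS 𝒱).ncard := by
        rw [add_comm, Set.ncard_diff_add_ncard_of_subset hsub hfin]
    _ ≤ _ := by omega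
end

section
/- Let γ be a connected graph with half-edges and S ⊆ Ver. Then the number of edges of γ not contained in the induced subgraph on S satisfies |E(γ)| − |E_γ(S)| ≥ |Ver ∖ S| + |π₀(γ,S)| − 1. -/
/-- Chains of fixed length for a relation. -/
def chainLen {Q : Type*} (R : Q → Q → Prop) : ℕ → Q → Q → Prop
  | 0, a, c => a = c
  | n+1, a, c => ∃ b, R a b ∧ chainLen R n b c

lemma chainLen_snoc {Q : Type*} {R : Q → Q → Prop} :
    ∀ {n : ℕ} {a b c : Q}, chainLen R n a b → R b c → chainLen R (n+1) a c := by
  intro n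
  induction n with
  | zero => intro a b c h hb; exact ⟨c, h ▸ hb, rfl⟩
  | succ n ih =>
    rintro a b c ⟨x, hax, hx⟩ hb
    exact ⟨x, hax, ih hx hb⟩

lemma chainLen_last {Q : Type*} {R : Q → Q → Prop} :
    ∀ {n : ℕ} {a c : Q}, chainLen R (n+1) a c → ∃ b, chainLen R n a b ∧ R b c := by
  intro n
  induction n with
  | zero => rintro a c ⟨b, hab, (hbc : b = c)⟩; exact ⟨a, rfl, hbc ▸ hab⟩
  | succ n ih =>
    rintro a c ⟨b, hab, h⟩
    obtain ⟨m, hbm, hmc⟩ := ih h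
    exact ⟨m, ⟨b, hab, hbm⟩, hmc⟩

lemma exists_chainLen_of_reflTransGen {Q : Type*} {R : Q → Q → Prop} {a b : Q}
    (h : Relation.ReflTransGen R a b) : ∃ n, chainLen R n a b := by
  induction h with
  | refl => exact ⟨0, rfl⟩
  | tail _ hbc ih =>
    obtain ⟨n, hn⟩ := ih
    exact ⟨n+1, chainLen_snoc hn hbc⟩

/-- Tree bound: a set of vertices all reachable from a root `r`, using edges encoded
by flags (with involution `ϑ`) satisfying predicate `G`, has at most
(number of `G`-edges) + 1 elements. -/
lemma tree_bound {Q F : Type*} [Finite F] (e₀ e₁ : F → Q) (ϑ : F → F)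
    (hinv : Function.Involutive ϑ) (h01 : ∀ f, e₀ (ϑ f) = e₁ f)
    (G : F → Prop) (hG : ∀ f, G f → G (ϑ f))
    (QS : Set Q) (r : Q)
    (hreach : ∀ a ∈ QS, Relation.ReflTransGen (fun a b => ∃ f, G f ∧ e₀ f = a ∧ e₁ f = b) r a) :
    QS.ncard ≤ {e : Set F | ∃ f, G f ∧ e = {f, ϑ f}}.ncard + 1 := by
  classical
  have h10 : ∀ f, e₁ (ϑ f) = e₀ f := by
    intro f
    have h := h01 (ϑ f)
    rw [hinv f] at h
    exact h.symm
  set R : Q → Q → Prop := fun a b => ∃ f, G f ∧ e₀ f = a ∧ e₁ f = b with hR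
  set D : Set (Set F) := {e : Set F | ∃ f, G f ∧ e = {f, ϑ f}} with hD
  have hDfin : D.Finite := Set.toFinite _
  have hex : ∀ a ∈ QS, ∃ n, chainLen R n r a :=
    fun a ha => exists_chainLen_of_reflTransGen (hreach a ha)
  set d : Q → ℕ := fun a => if h : ∃ n, chainLen R n r a then Nat.find h else 0 with hd
  have hdspec : ∀ a, (∃ n, chainLen R n r a) → chainLen R (d a) r a := by
    intro a h
    simp only [hd, dif_pos h]
    exact Nat.find_spec h
  have hdmin : ∀ a n, chainLen R n r a → d a ≤ n := by
    intro a n h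
    have hx : ∃ n, chainLen R n r a := ⟨n, h⟩
    simp only [hd, dif_pos hx]
    exact Nat.find_min' _ h
  have key : ∀ a ∈ QS, a ≠ r → ∃ f, G f ∧ e₁ f = a ∧ d (e₀ f) + 1 = d a := by
    intro a ha hne
    have hx : ∃ n, chainLen R n r a := hex a ha
    have hchain := hdspec a hx
    have hd0 : d a ≠ 0 := by
      intro h0
      rw [h0] at hchain
      exact hne hchain.symm
    obtain ⟨m, hm⟩ := Nat.exists_eq_succ_of_ne_zero hd0
    rw [hm] at hchain
    obtain ⟨u, hu, f, hGf, hf0, hf1⟩ := chainLen_last hchain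
    subst hf0
    have hdu : d (e₀ f) ≤ m := hdmin _ m hu
    have hda : d a ≤ d (e₀ f) + 1 :=
      hdmin a _ (chainLen_snoc (hdspec _ ⟨m, hu⟩) ⟨f, hGf, rfl, hf1⟩)
    exact ⟨f, hGf, hf1, by omega⟩
  set P : Q → F → Prop := fun a f => G f ∧ e₁ f = a ∧ d (e₀ f) + 1 = d a with hP
  set Φ : Q → Set F := fun a =>
    if h : ∃ f, P a f then {Classical.choose h, ϑ (Classical.choose h)} else ∅ with hΦ
  have hmaps : ∀ a ∈ QS \ {r}, Φ a ∈ D := by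
    rintro a ⟨haQ, har⟩
    have h : ∃ f, P a f := key a haQ har
    simp only [hΦ, dif_pos h]
    exact ⟨Classical.choose h, (Classical.choose_spec h).1, rfl⟩
  have hinj : Set.InjOn Φ (QS \ {r}) := by
    rintro a ⟨haQ, har⟩ b ⟨hbQ, hbr⟩ hab
    have hA : ∃ f, P a f := key a haQ har
    have hB : ∃ f, P b f := key b hbQ hbr
    simp only [hΦ, dif_pos hA, dif_pos hB] at hab
    obtain ⟨hGa, ha1, ha2⟩ := Classical.choose_spec hA
    obtain ⟨hGb, hb1, hb2⟩ := Classical.choose_spec hB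
    set fa := Classical.choose hA
    set fb := Classical.choose hB
    have hfb : fb = fa ∨ fb = ϑ fa := by
      have hm : fb ∈ ({fa, ϑ fa} : Set F) := by
        rw [hab]
        exact Set.mem_insert _ _
      simpa using hm
    rcases hfb with hfb | hfb
    · rw [← ha1, ← hb1, hfb]
    · exfalso
      rw [hfb, h10 fa] at hb1
      rw [hfb, h01 fa, ha1] at hb2
      rw [hb1] at ha2
      omega
  have hfin : (QS \ {r}).Finite := by
    apply Set.Finite.of_finite_image _ hinj
    exact hDfin.subset (Set.image_subset_iff.mpr hmaps)
  have h1 : QS.ncard ≤ (insert r (QS \ {r})).ncard := by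
    apply Set.ncard_le_ncard _ (hfin.insert r)
    intro x hx
    by_cases hxr : x = r
    · exact hxr ▸ Set.mem_insert _ _
    · exact Set.mem_insert_of_mem _ ⟨hx, hxr⟩
  have h2 : (QS \ {r}).ncard ≤ D.ncard :=
    Set.ncard_le_ncard_of_injOn Φ hmaps hinj hDfin
  have h3 := Set.ncard_insert_le r (QS \ {r})
  omega

/-- For a connected graph with half-edges and a vertex subset `S`,
`|E(γ)| − |E_γ(S)| ≥ |Ver ∖ S| + |π₀(γ,S)| − 1`. -/
theorem stmt5 {V F : Type*} [Fintype V] [Fintype F]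
    (ε : F → V) (ϑ : F → F) (hinv : Function.Involutive ϑ) (hfpf : ∀ f, ϑ f ≠ f)
    (hconn : IsConnectedGraph ε ϑ)
    (S : Set V) :
    ((Sᶜ : Set V).ncard : ℤ) + (pi0 ε ϑ S).ncard - 1 ≤
      ((edgeSet ϑ).ncard : ℤ) - (edgesIn ε ϑ S).ncard := by
  classical
  have hE : (edgeSet ϑ).Finite := Set.toFinite _
  have hEsub : edgesIn ε ϑ S ⊆ edgeSet ϑ := by
    rintro e ⟨f, he, -⟩
    exact ⟨f, he⟩
  have hcnt : (edgeSet ϑ \ edgesIn ε ϑ S).ncard + (edgesIn ε ϑ S).ncard = (edgeSet ϑ).ncard :=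
    Set.ncard_diff_add_ncard_of_subset hEsub hE
  by_cases hV : Nonempty V
  case neg =>
    haveI : IsEmpty V := not_nonempty_iff.mp hV
    have h1 : (Sᶜ : Set V) = ∅ := Set.eq_empty_of_isEmpty _
    have h2 : pi0 ε ϑ S = ∅ := by
      ext C
      simp only [pi0, Set.mem_setOf_eq, Set.mem_empty_iff_false, iff_false]
      rintro ⟨v, -, -⟩
      exact hV ⟨v⟩
    have h3 : (edgesIn ε ϑ S).ncard ≤ (edgeSet ϑ).ncard := Set.ncard_le_ncard hEsub hE
    rw [h1, h2]
    simp only [Set.ncard_empty]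
    omega
  case pos =>
  obtain ⟨v₀⟩ := hV
  set q : V → Set V := fun v => if v ∈ S then component ε ϑ S v else {v} with hq
  have hqS : ∀ v ∈ S, q v = component ε ϑ S v := fun v hv => if_pos hv
  have hqnS : ∀ v ∉ S, q v = {v} := fun v hv => if_neg hv
  have hsym : Symmetric (StepIn ε ϑ S) := by
    rintro x y ⟨hx, hy, f, h1, h2⟩
    refine ⟨hy, hx, ϑ f, h2, ?_⟩
    rw [hinv f]
    exact h1
  have hcomp : ∀ v w, Relation.ReflTransGen (StepIn ε ϑ S) v w →
      component ε ϑ S v = component ε ϑ S w := by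
    intro v w h
    have h' : Relation.ReflTransGen (StepIn ε ϑ S) w v :=
      (@Relation.ReflTransGen.stdSymm _ _ ⟨fun a b hab => hsym hab⟩).symm _ _ h
    ext z
    simp only [component, Set.mem_setOf_eq]
    exact ⟨fun hz => h'.trans hz, fun hz => h.trans hz⟩
  set Rq : Set V → Set V → Prop := fun a b =>
    ∃ f, (ε f ∉ S ∨ ε (ϑ f) ∉ S) ∧ q (ε f) = a ∧ q (ε (ϑ f)) = b with hRq
  have hlift : ∀ v w, Relation.ReflTransGen (Step ε ϑ) v w →
      Relation.ReflTransGen Rq (q v) (q w) := by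
    intro v w h
    induction h with
    | refl => exact Relation.ReflTransGen.refl
    | @tail b c hvb hbc ih =>
      obtain ⟨f, hf1, hf2⟩ := hbc
      by_cases hbc' : ε f ∈ S ∧ ε (ϑ f) ∈ S
      · have heq : q (ε f) = q (ε (ϑ f)) := by
          rw [hqS _ hbc'.1, hqS _ hbc'.2]
          exact hcomp _ _ (Relation.ReflTransGen.single ⟨hbc'.1, hbc'.2, f, rfl, rfl⟩)
        rw [hf1, hf2] at heq
        exact heq ▸ ih
      · exact ih.tail ⟨f, by tauto, by rw [hf1], by rw [hf2]⟩
  set QS : Set (Set V) := q '' Set.univ with hQS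
  have hreach : ∀ a ∈ QS, Relation.ReflTransGen Rq (q v₀) a := by
    rintro a ⟨v, -, rfl⟩
    by_cases hv : v₀ = v
    · rw [hv]
    · exact hlift _ _ (hconn v₀ v hv)
  have htree := tree_bound (fun f => q (ε f)) (fun f => q (ε (ϑ f))) ϑ hinv
      (fun f => rfl) (fun f => ε f ∉ S ∨ ε (ϑ f) ∉ S)
      (by
        rintro f (h | h)
        · right; rw [hinv f]; exact h
        · left; exact h)
      QS (q v₀) hreach
  have hDsub : {e : Set F | ∃ f, (ε f ∉ S ∨ ε (ϑ f) ∉ S) ∧ e = {f, ϑ f}} ⊆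
      edgeSet ϑ \ edgesIn ε ϑ S := by
    rintro e ⟨f, hf, rfl⟩
    refine ⟨⟨f, rfl⟩, ?_⟩
    rintro ⟨f', he, hS1, hS2⟩
    have hf' : f' ∈ ({f, ϑ f} : Set F) := by
      rw [he]
      exact Set.mem_insert _ _
    rcases hf' with rfl | hf'
    · tauto
    · rw [hf'] at hS1 hS2
      rw [hinv f] at hS2
      tauto
  have hQSle : QS.ncard ≤ (edgeSet ϑ \ edgesIn ε ϑ S).ncard + 1 :=
    le_trans htree (add_le_add_left (Set.ncard_le_ncard hDsub hE.diff) 1)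
  have hqimage : QS = pi0 ε ϑ S ∪ (fun v => ({v} : Set V)) '' Sᶜ := by
    ext C
    constructor
    · rintro ⟨v, -, rfl⟩
      by_cases hv : v ∈ S
      · exact Or.inl ⟨v, hv, hqS v hv⟩
      · exact Or.inr ⟨v, hv, (hqnS v hv).symm⟩
    · rintro (⟨v, hv, rfl⟩ | ⟨v, hv, rfl⟩)
      · exact ⟨v, Set.mem_univ v, hqS v hv⟩
      · exact ⟨v, Set.mem_univ v, hqnS v hv⟩
  have hdisj : Disjoint (pi0 ε ϑ S) ((fun v => ({v} : Set V)) '' Sᶜ) := by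
    rw [Set.disjoint_left]
    rintro C ⟨v, hv, rfl⟩ ⟨w, hw, heq⟩
    have hmem : v ∈ component ε ϑ S v := Relation.ReflTransGen.refl
    rw [← heq] at hmem
    exact hw ((Set.mem_singleton_iff.mp hmem) ▸ hv)
  have hcount : QS.ncard = (pi0 ε ϑ S).ncard + Sᶜ.ncard := by
    rw [hqimage, Set.ncard_union_eq hdisj (Set.toFinite _) (Set.toFinite _)]
    congr 1
    apply Set.ncard_image_of_injOn
    intro a _ b _ h
    exact Set.singleton_eq_singleton_iff.mp h
  omega
end
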